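/- Set-cover to VED reduction (star-convex case), forward direction: given a set system (S, F) with a cover C of size t, the constructed star-convex bipartite graph G has a vertex-edge dominating set of size t + 1, namely D = {b_j : C_j ∈ C} ∪ {u}. -/

import Mathlib

open SimpleGraph

/-- The closed neighbourhood `N[v] = {v} ∪ N(v)` of a vertex. -/
def closedNbhd {V : Type*} (G : SimpleGraph V) (v : V) : Set V :=
  insert v (G.neighborSet v)

/-- `D` is a vertex-edge dominating set: every edge `uv` has a vertex of `D`
in `N[u] ∪ N[v]`. -/
def IsVEDomSet {V : Type*} (G : SimpleGraph V) (D : Set V) : Prop :=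
  ∀ ⦃u v : V⦄, G.Adj u v → ((closedNbhd G u ∪ closedNbhd G v) ∩ D).Nonempty

/-- The vertex-edge domination number `γ_ve(G)`. -/
noncomputable def vedNumber {V : Type*} (G : SimpleGraph V) : ℕ :=
  sInf {n | ∃ D : Set V, IsVEDomSet G D ∧ D.ncard = n}

/-- Vertices of the star-convex reduction graph: element vertices `a i`,
set vertices `b j`, pendants `z i`, and the special vertices `u`, `v`, `u'`. -/
inductive SCVert (p q : ℕ) : Type
  | a : Fin p → SCVert p q
  | b : Fin q → SCVert p q
  | z : Fin p → SCVert p q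
  | u : SCVert p q
  | v : SCVert p q
  | u' : SCVert p q

/-- The edge relation of the star-convex reduction graph, for the membership
relation `M i j` meaning `s i ∈ C j`. -/
def scRel {p q : ℕ} (M : Fin p → Fin q → Prop) : SCVert p q → SCVert p q → Prop
  | .a i, .b j => M i j
  | .a i, .z i' => i = i'
  | .u, .b _ => True
  | .u, .v => True
  | .v, .u' => True
  | _, _ => False

/-- The star-convex reduction graph. -/
def scGraph {p q : ℕ} (M : Fin p → Fin q → Prop) : SimpleGraph (SCVert p q) :=
  SimpleGraph.fromRel (scRel M)

theorem sc_forward {p q t : ℕ} (M : Fin p → Fin q → Prop) (C : Finset (Fin q))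
    (hcover : ∀ i : Fin p, ∃ j ∈ C, M i j) (hcard : C.card = t) :
    IsVEDomSet (scGraph M)
        ((fun j => SCVert.b j) '' ↑C ∪ {SCVert.u} : Set (SCVert p q)) ∧
      ((fun j => SCVert.b j) '' ↑C ∪ {SCVert.u} : Set (SCVert p q)).ncard = t + 1 := by
  set D : Set (SCVert p q) := ((fun j => SCVert.b j) '' ↑C ∪ {SCVert.u}) with hD
  have hbmem : ∀ j ∈ C, (SCVert.b j : SCVert p q) ∈ D := fun j hj =>
    Or.inl ⟨j, hj, rfl⟩
  have humem : (SCVert.u : SCVert p q) ∈ D := Or.inr rfl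
  have hacase : ∀ (i : Fin p) (y : SCVert p q),
      ((closedNbhd (scGraph M) (SCVert.a i) ∪ closedNbhd (scGraph M) y) ∩ D).Nonempty := by
    intro i y
    obtain ⟨j, hj, hM⟩ := hcover i
    refine ⟨SCVert.b j, Or.inl (Or.inr ?_), hbmem j hj⟩
    show (scGraph M).Adj (SCVert.a i) (SCVert.b j)
    simp [scGraph, scRel, hM]
  have hucase : ∀ (y z : SCVert p q), (SCVert.u : SCVert p q) ∈ closedNbhd (scGraph M) y →
      ((closedNbhd (scGraph M) y ∪ closedNbhd (scGraph M) z) ∩ D).Nonempty := by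
    intro y z hy
    exact ⟨SCVert.u, Or.inl hy, humem⟩
  have huself : (SCVert.u : SCVert p q) ∈ closedNbhd (scGraph M) SCVert.u := Or.inl rfl
  have hub : ∀ j : Fin q, (SCVert.u : SCVert p q) ∈ closedNbhd (scGraph M) (SCVert.b j) := by
    intro j
    refine Or.inr ?_
    show (scGraph M).Adj (SCVert.b j) SCVert.u
    simp [scGraph, scRel]
  have hvu : (SCVert.u : SCVert p q) ∈ closedNbhd (scGraph M) SCVert.v := by
    refine Or.inr ?_
    show (scGraph M).Adj SCVert.v SCVert.u
    simp [scGraph, scRel]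
  constructor
  · rintro x y ⟨hne, hrel⟩
    have hsymm : ∀ {x y : SCVert p q},
        ((closedNbhd (scGraph M) y ∪ closedNbhd (scGraph M) x) ∩ D).Nonempty →
        ((closedNbhd (scGraph M) x ∪ closedNbhd (scGraph M) y) ∩ D).Nonempty := by
      rintro x y ⟨w, hw1, hw2⟩
      exact ⟨w, Or.symm hw1, hw2⟩
    cases x <;> cases y <;> simp only [scRel, or_false, false_or, or_self] at hrel
    · exact hacase _ _
    · exact hacase _ _
    · exact hsymm (hacase _ _)
    · exact hucase _ _ (hub _)
    · exact hsymm (hacase _ _)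
    · exact hucase _ _ huself
    · exact hucase _ _ huself
    · exact hsymm (hucase _ _ huself)
    · exact hucase _ _ hvu
    · exact hsymm (hucase _ _ hvu)
  · have hinj : Function.Injective (fun j : Fin q => (SCVert.b j : SCVert p q)) := by
      intro a b h
      injection h
    have hdisj : Disjoint ((fun j => SCVert.b j) '' (↑C : Set (Fin q)))
        ({SCVert.u} : Set (SCVert p q)) := by
      rw [Set.disjoint_singleton_right]
      rintro ⟨j, hj, h⟩
      cases h
    rw [hD, Set.ncard_union_eq hdisj ((C.finite_toSet.image _))
        (Set.finite_singleton _),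
      Set.ncard_image_of_injective _ hinj, Set.ncard_coe_finset, hcard,
      Set.ncard_singleton]
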